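/- For every b > 0, the function g ↦ F(b,g) is continuous on [0,∞), convex on [0,∞), and monotone increasing on [0,∞). -/

import Mathlib

open Real Set

/-- The magnetic penalization function
`F(b,g) = πg² + (b²/(4π))·{2πg/b}·(1 − {2πg/b})`. -/
noncomputable def Fpen (b g : ℝ) : ℝ :=
  π * g ^ 2 + b ^ 2 / (4 * π) * Int.fract (2 * π * g / b) * (1 - Int.fract (2 * π * g / b))

/-- Auxiliary function: `h(s) = s² + {s}(1−{s})`. -/
noncomputable def hAux (s : ℝ) : ℝ := s ^ 2 + Int.fract s * (1 - Int.fract s)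

/-- The secant lines of `s²` at integers. -/
noncomputable def lAux (n : ℤ) (s : ℝ) : ℝ := (2 * n + 1) * s - n * (n + 1)

lemma hAux_eq_lAux_floor (s : ℝ) : hAux s = lAux ⌊s⌋ s := by
  have h : Int.fract s = s - ⌊s⌋ := rfl
  simp only [hAux, lAux, h]
  ring

lemma lAux_le_hAux (n : ℤ) (s : ℝ) : lAux n s ≤ hAux s := by
  have hf0 : (0:ℝ) ≤ Int.fract s := Int.fract_nonneg s
  have hf1 : Int.fract s < 1 := Int.fract_lt_one s
  have h : Int.fract s = s - ⌊s⌋ := rfl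
  set k : ℤ := ⌊s⌋ with hk
  have hs : s = (k:ℝ) + Int.fract s := by rw [h]; ring
  rcases lt_trichotomy k n with hkn | hkn | hkn
  · have : (k:ℝ) ≤ (n:ℝ) - 1 := by exact_mod_cast Int.le_sub_one_of_lt hkn
    simp only [hAux, lAux]
    nlinarith [sq_nonneg ((k:ℝ) - n), sq_nonneg (Int.fract s)]
  · subst hkn
    simp only [hAux, lAux]
    nlinarith [sq_nonneg (Int.fract s)]
  · have : (n:ℝ) + 1 ≤ (k:ℝ) := by exact_mod_cast hkn
    simp only [hAux, lAux]
    nlinarith [sq_nonneg ((k:ℝ) - n), sq_nonneg (Int.fract s)]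

lemma hAux_mono : MonotoneOn hAux (Ici 0) := by
  intro x hx y _ hxy
  have hk0 : (0:ℤ) ≤ ⌊x⌋ := Int.floor_nonneg.mpr hx
  rw [hAux_eq_lAux_floor x]
  calc lAux ⌊x⌋ x ≤ lAux ⌊x⌋ y := by
        simp only [lAux]
        have : (0:ℝ) ≤ (⌊x⌋:ℝ) := by exact_mod_cast hk0
        nlinarith
    _ ≤ hAux y := lAux_le_hAux _ y

lemma hAux_convex : ConvexOn ℝ univ hAux := by
  refine ⟨convex_univ, fun x _ y _ a c ha hc hac => ?_⟩
  set z := a • x + c • y with hz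
  rw [hAux_eq_lAux_floor z]
  have hx' := lAux_le_hAux ⌊z⌋ x
  have hy' := lAux_le_hAux ⌊z⌋ y
  have : lAux ⌊z⌋ z = a * lAux ⌊z⌋ x + c * lAux ⌊z⌋ y := by
    simp only [lAux, hz, smul_eq_mul]
    linear_combination ((⌊a * x + c * y⌋ : ℝ) * ((⌊a * x + c * y⌋ : ℝ) + 1)) * hac
  rw [this]
  simp only [smul_eq_mul]
  nlinarith

lemma hAux_continuous : Continuous hAux := by
  have h1 : Continuous fun s : ℝ => Int.fract s * (1 - Int.fract s) := by
    have hf : ContinuousOn (fun x : ℝ => x * (1 - x)) (Icc 0 1) := by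
      fun_prop
    have := hf.comp_fract'' (by norm_num)
    exact this
  have : Continuous fun s : ℝ => s ^ 2 + Int.fract s * (1 - Int.fract s) :=
    (continuous_pow 2).add h1
  exact this

lemma Fpen_eq (b : ℝ) (hb : 0 < b) (g : ℝ) :
    Fpen b g = b ^ 2 / (4 * π) * hAux (2 * π * g / b) := by
  have hb' : b ≠ 0 := ne_of_gt hb
  have hπ : (π:ℝ) ≠ 0 := Real.pi_ne_zero
  simp only [Fpen, hAux]
  field_simp
  ring

/-- For `b > 0`, `g ↦ F(b,g)` is continuous, convex, and monotone increasing on `[0,∞)`. -/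
theorem Fpen_continuous_convex_monotone (b : ℝ) (hb : 0 < b) :
    ContinuousOn (Fpen b) (Ici 0) ∧ ConvexOn ℝ (Ici 0) (Fpen b) ∧
      MonotoneOn (Fpen b) (Ici 0) := by
  have hb' : b ≠ 0 := ne_of_gt hb
  have hc : (0:ℝ) ≤ b ^ 2 / (4 * π) := by positivity
  have key : ∀ g, Fpen b g = b ^ 2 / (4 * π) * hAux (2 * π * g / b) := Fpen_eq b hb
  refine ⟨?_, ?_, ?_⟩
  · have : Continuous (Fpen b) := by
      have : Continuous fun g => b ^ 2 / (4 * π) * hAux (2 * π * g / b) :=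
        continuous_const.mul (hAux_continuous.comp (by fun_prop))
      exact this.congr fun g => (key g).symm
    exact this.continuousOn
  · refine ⟨convex_Ici 0, fun x _ y _ a c ha hc' hac => ?_⟩
    simp only [smul_eq_mul, key]
    have hcvx := hAux_convex.2 (mem_univ (2 * π * x / b)) (mem_univ (2 * π * y / b))
      ha hc' hac
    simp only [smul_eq_mul] at hcvx
    have harg : 2 * π * (a * x + c * y) / b
        = a * (2 * π * x / b) + c * (2 * π * y / b) := by field_simp
    rw [harg]
    nlinarith [hcvx, hc, mul_le_mul_of_nonneg_left hcvx hc]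
  · intro x hx y hy hxy
    simp only [key]
    have hσ : ∀ g : ℝ, 0 ≤ g → (0:ℝ) ≤ 2 * π * g / b := fun g hg => by positivity
    have hmono := hAux_mono (hσ x hx) (hσ y hy)
      (by gcongr)
    exact mul_le_mul_of_nonneg_left hmono hc
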